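/- For every non-negative integer n, writing d = 2^n, the matrix A_n satisfies |det A_n| = (2d)^{d/2} / √2. In particular A_n is invertible. -/
import Mathlib


/-- σ(n,k) from the paper: σ(0,1)=1 and, with d = 2^n, σ(n+1,k)=σ(n,k) for 1 ≤ k ≤ d,
σ(n+1,k)=2d+1−σ(n,k−d) for d+1 ≤ k ≤ 2d. -/
def sigmaCF : ℕ → ℕ → ℤ
  | 0, _ => 1
  | n + 1, k => if k ≤ 2 ^ n then sigmaCF n k else 2 * 2 ^ n + 1 - sigmaCF n (k - 2 ^ n)

/-- ξ_{n,k} = 2 cos(π(2σ(n,k) − 1)/2^{n+1}). -/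
noncomputable def xiCF (n k : ℕ) : ℝ :=
  2 * Real.cos (Real.pi * (2 * (sigmaCF n k : ℝ) - 1) / 2 ^ (n + 1))

/-- D_n = diag(ξ_{n+1,1}, …, ξ_{n+1,2^n}). -/
noncomputable def DCF (n : ℕ) : Matrix (Fin (2 ^ n)) (Fin (2 ^ n)) ℝ :=
  Matrix.diagonal fun i => xiCF (n + 1) (i.val + 1)

/-- A_0 = (1), A_{n+1} = [[A_n, D_n A_n], [A_n, −D_n A_n]]. -/
noncomputable def ACF : (n : ℕ) → Matrix (Fin (2 ^ n)) (Fin (2 ^ n)) ℝ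
  | 0 => 1
  | n + 1 =>
    Matrix.reindex (finSumFinEquiv.trans (finCongr (by rw [pow_succ, mul_two])))
      (finSumFinEquiv.trans (finCongr (by rw [pow_succ, mul_two])))
      (Matrix.fromBlocks (ACF n) (DCF n * ACF n) (ACF n) (-(DCF n * ACF n)))

open Finset Real

noncomputable def Pcf (n : ℕ) : ℝ :=
  ∏ i ∈ Finset.range (2 ^ n), (2 * Real.cos (Real.pi * (2 * (sigmaCF n (i + 1) : ℝ) - 1) / 2 ^ (n + 2)))

noncomputable def Scf (n : ℕ) : ℝ :=
  ∏ i ∈ Finset.range (2 ^ n), (2 * Real.sin (Real.pi * (2 * (sigmaCF n (i + 1) : ℝ) - 1) / 2 ^ (n + 2)))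

lemma sigma_left (n k : ℕ) (h : k ≤ 2 ^ n) : sigmaCF (n + 1) k = sigmaCF n k := by
  simp [sigmaCF, h]

lemma sigma_right (n i : ℕ) : sigmaCF (n + 1) (2 ^ n + i + 1) = 2 * 2 ^ n + 1 - sigmaCF n (i + 1) := by
  have h : ¬ 2 ^ n + i + 1 ≤ 2 ^ n := by omega
  simp only [sigmaCF, h, if_false]
  have h2 : 2 ^ n + i + 1 - 2 ^ n = i + 1 := by omega
  rw [h2]

lemma key_term (n : ℕ) (s : ℝ) :
    (2 * Real.sin (Real.pi * (2 * s - 1) / 2 ^ (n + 3))) *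
      (2 * Real.sin (Real.pi * (2 * (2 * 2 ^ n + 1 - s) - 1) / 2 ^ (n + 3)))
    = 2 * Real.sin (Real.pi * (2 * s - 1) / 2 ^ (n + 2)) := by
  have h1 : Real.pi * (2 * (2 * 2 ^ n + 1 - s) - 1) / 2 ^ (n + 3)
      = Real.pi / 2 - Real.pi * (2 * s - 1) / 2 ^ (n + 3) := by
    have h2 : (2 : ℝ) ^ (n + 3) = 2 ^ n * 8 := by ring
    field_simp [h2]
    ring
  have h3 : Real.pi * (2 * s - 1) / 2 ^ (n + 2)
      = 2 * (Real.pi * (2 * s - 1) / 2 ^ (n + 3)) := by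
    have h2 : (2 : ℝ) ^ (n + 3) = 2 ^ (n + 2) * 2 := by ring
    field_simp [h2]
    ring
  rw [h1, Real.sin_pi_div_two_sub, h3, Real.sin_two_mul]
  ring

lemma key_term_cos (n : ℕ) (s : ℝ) :
    (2 * Real.cos (Real.pi * (2 * s - 1) / 2 ^ (n + 3))) *
      (2 * Real.cos (Real.pi * (2 * (2 * 2 ^ n + 1 - s) - 1) / 2 ^ (n + 3)))
    = 2 * Real.sin (Real.pi * (2 * s - 1) / 2 ^ (n + 2)) := by
  have h1 : Real.pi * (2 * (2 * 2 ^ n + 1 - s) - 1) / 2 ^ (n + 3)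
      = Real.pi / 2 - Real.pi * (2 * s - 1) / 2 ^ (n + 3) := by
    have h2 : (2 : ℝ) ^ (n + 3) = 2 ^ n * 8 := by ring
    field_simp [h2]
    ring
  have h3 : Real.pi * (2 * s - 1) / 2 ^ (n + 2)
      = 2 * (Real.pi * (2 * s - 1) / 2 ^ (n + 3)) := by
    have h2 : (2 : ℝ) ^ (n + 3) = 2 ^ (n + 2) * 2 := by ring
    field_simp [h2]
    ring
  rw [h1, Real.cos_pi_div_two_sub, h3, Real.sin_two_mul]
  ring

lemma Scf_succ (n : ℕ) : Scf (n + 1) = Scf n := by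
  unfold Scf
  have hsplit : (2 : ℕ) ^ (n + 1) = 2 ^ n + 2 ^ n := by rw [pow_succ]; omega
  rw [hsplit, Finset.prod_range_add, ← Finset.prod_mul_distrib]
  apply Finset.prod_congr rfl
  intro i hi
  have hi' : i + 1 ≤ 2 ^ n := by simpa using Finset.mem_range.mp hi
  rw [sigma_left n (i + 1) hi', sigma_right n i]
  have := key_term n (sigmaCF n (i + 1) : ℝ)
  convert this using 3 <;> push_cast <;> ring

lemma Pcf_succ (n : ℕ) : Pcf (n + 1) = Scf n := by
  unfold Pcf Scf
  have hsplit : (2 : ℕ) ^ (n + 1) = 2 ^ n + 2 ^ n := by rw [pow_succ]; omega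
  rw [hsplit, Finset.prod_range_add, ← Finset.prod_mul_distrib]
  apply Finset.prod_congr rfl
  intro i hi
  have hi' : i + 1 ≤ 2 ^ n := by simpa using Finset.mem_range.mp hi
  rw [sigma_left n (i + 1) hi', sigma_right n i]
  have := key_term_cos n (sigmaCF n (i + 1) : ℝ)
  convert this using 3 <;> push_cast <;> ring

lemma Scf_zero : Scf 0 = Real.sqrt 2 := by
  unfold Scf
  simp [sigmaCF]
  rw [show Real.pi * (2 - 1) / 2 ^ 2 = Real.pi / 4 by ring, Real.sin_pi_div_four]
  ring

lemma Scf_eq (n : ℕ) : Scf n = Real.sqrt 2 := by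
  induction n with
  | zero => exact Scf_zero
  | succ n ih => rw [Scf_succ, ih]

lemma Pcf_eq (n : ℕ) : Pcf n = Real.sqrt 2 := by
  cases n with
  | zero =>
    unfold Pcf
    simp [sigmaCF]
    rw [show Real.pi * (2 - 1) / 2 ^ 2 = Real.pi / 4 by ring, Real.cos_pi_div_four]
    ring
  | succ n => rw [Pcf_succ, Scf_eq]

lemma det_DCF (n : ℕ) : (DCF n).det = Real.sqrt 2 := by
  rw [DCF, Matrix.det_diagonal,
    Fin.prod_univ_eq_prod_range (fun i => xiCF (n + 1) (i + 1)), ← Pcf_eq n]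
  unfold Pcf xiCF
  apply Finset.prod_congr rfl
  intro i hi
  rw [sigma_left n (i + 1) (by simpa using Finset.mem_range.mp hi)]

lemma det_ACF_succ (n : ℕ) :
    (ACF (n + 1)).det = (-2 : ℝ) ^ (2 ^ n) * Real.sqrt 2 * ((ACF n).det) ^ 2 := by
  rw [ACF, Matrix.det_reindex_self]
  have hfac : Matrix.fromBlocks (ACF n) (DCF n * ACF n) (ACF n) (-(DCF n * ACF n))
      = Matrix.fromBlocks 1 (DCF n) 1 (-(DCF n)) * Matrix.fromBlocks (ACF n) 0 0 (ACF n) := by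
    rw [Matrix.fromBlocks_multiply]
    simp [Matrix.neg_mul]
  rw [hfac, Matrix.det_mul, Matrix.det_fromBlocks_one₁₁, Matrix.det_fromBlocks_zero₂₁]
  have hd : (-(DCF n) - 1 * DCF n)
      = Matrix.diagonal (fun i : Fin (2 ^ n) => -2 * xiCF (n + 1) (i.val + 1)) := by
    ext i j
    by_cases h : i = j
    · subst h
      simp [DCF, Matrix.diagonal]
      ring
    · simp [DCF, Matrix.diagonal_apply_ne _ h]
  have hx : ∏ i : Fin (2 ^ n), xiCF (n + 1) (i.val + 1) = Real.sqrt 2 := by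
    rw [← det_DCF n, DCF, Matrix.det_diagonal]
  rw [hd, Matrix.det_diagonal, Finset.prod_mul_distrib, Finset.prod_const, hx,
    Finset.card_univ, Fintype.card_fin]
  ring

noncomputable def eCF (n : ℕ) : ℝ := ((n + 1) * 2 ^ n - 1) / 2

lemma abs_det (n : ℕ) : |(ACF n).det| = (2 : ℝ) ^ (eCF n) := by
  induction n with
  | zero =>
    have : eCF 0 = 0 := by unfold eCF; norm_num
    simp [ACF, this]
  | succ n ih =>
    rw [det_ACF_succ, abs_mul, abs_mul, abs_pow, abs_pow, ih]
    rw [show |(-2 : ℝ)| = 2 by norm_num,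
      abs_of_nonneg (Real.sqrt_nonneg 2), Real.sqrt_eq_rpow,
      ← Real.rpow_natCast (2 : ℝ) (2 ^ n),
      ← Real.rpow_natCast ((2 : ℝ) ^ eCF n) 2, ← Real.rpow_mul (by norm_num),
      ← Real.rpow_add (by norm_num), ← Real.rpow_add (by norm_num)]
    congr 1
    unfold eCF
    push_cast
    ring

/-- For every non-negative integer `n`, writing `d = 2^n`, the matrix `A_n` satisfies
`|det A_n| = (2d)^{d/2} / √2`; in particular `A_n` is invertible. -/
theorem abs_det_ACF (n : ℕ) :
    |(ACF n).det| = (2 * 2 ^ n : ℝ) ^ (((2 : ℝ) ^ n) / 2) / Real.sqrt 2 ∧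
      IsUnit (ACF n).det := by
  have h := abs_det n
  constructor
  · rw [h, show (2 * 2 ^ n : ℝ) = 2 ^ (n + 1 : ℕ) by rw [pow_succ]; ring,
      ← Real.rpow_natCast 2 (n + 1), ← Real.rpow_mul (by norm_num), Real.sqrt_eq_rpow,
      ← Real.rpow_sub (by norm_num)]
    congr 1
    unfold eCF
    push_cast
    ring
  · rw [isUnit_iff_ne_zero]
    intro h0
    have hp := Real.rpow_pos_of_pos (by norm_num : (0 : ℝ) < 2) (eCF n)
    rw [h0, abs_zero] at h
    linarith
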